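/- Uniform bound on the auxiliary divided difference: let u solve L_ε u = f with homogeneous initial and boundary data and suppose |f(x,t)| ≤ C₀ and |∂u(x,t)/∂t| ≤ C₀ componentwise on [0,1] × [0,T]. Let û^{n+1} be a twice continuously differentiable solution of (I + (Δt/2) L_{x,ε}) û^{n+1} = (I − (Δt/2) L_{x,ε}) u(·,t_n) + (Δt/2)(f(·,t_n) + f(·,t_{n+1})) on (0,1) with û^{n+1}(0) = û^{n+1}(1) = 0. Then the function φ^{n+1} = (2/Δt)(û^{n+1} − u(·,t_n)) satisfies |φ^{n+1}(x)| ≤ C componentwise for all x ∈ [0,1], where C depends only on C₀ (in particular C is independent of ε, Δt and n). -/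

import Mathlib

open Set Filter Topology

private lemma itd2_const_mul (c : ℝ) {f : ℝ → ℝ} (hf : ContDiff ℝ 2 f) (x : ℝ) :
    iteratedDeriv 2 (fun z => c * f z) x = c * iteratedDeriv 2 f x := by
  simp only [← iteratedDerivWithin_univ]
  exact iteratedDerivWithin_const_mul (Set.mem_univ x) uniqueDiffOn_univ c
    hf.contDiffAt.contDiffWithinAt

private lemma itd2_sub {f g : ℝ → ℝ} (hf : ContDiff ℝ 2 f) (hg : ContDiff ℝ 2 g) (x : ℝ) :
    iteratedDeriv 2 (fun z => f z - g z) x = iteratedDeriv 2 f x - iteratedDeriv 2 g x := by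
  simp only [← iteratedDerivWithin_univ]
  exact iteratedDerivWithin_sub (Set.mem_univ x) uniqueDiffOn_univ
    hf.contDiffAt.contDiffWithinAt hg.contDiffAt.contDiffWithinAt

private lemma second_deriv_nonpos_of_isLocalMax {f : ℝ → ℝ} (hf : ContDiff ℝ 2 f)
    {x₀ : ℝ} (h : IsLocalMax f x₀) : iteratedDeriv 2 f x₀ ≤ 0 := by
  by_contra hcon
  push_neg at hcon
  have hf1 : deriv f x₀ = 0 := h.deriv_eq_zero
  have hder : ContDiff ℝ 1 (deriv f) := by
    have h2 : ContDiff ℝ (1 + 1) f := by norm_num; exact hf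
    exact (contDiff_succ_iff_deriv.mp h2).2.2
  have hitd : iteratedDeriv 2 f x₀ = deriv (deriv f) x₀ := by
    rw [iteratedDeriv_succ, iteratedDeriv_one]
  have hd : HasDerivAt (deriv f) (iteratedDeriv 2 f x₀) x₀ := by
    rw [hitd]
    exact ((hder.differentiable (by norm_num)) x₀).hasDerivAt
  have hslope := hasDerivAt_iff_tendsto_slope.mp hd
  have hev : ∀ᶠ y in 𝓝[≠] x₀, 0 < slope (deriv f) x₀ y :=
    hslope.eventually (eventually_gt_nhds hcon)
  have hmono : 𝓝[>] x₀ ≤ 𝓝[≠] x₀ :=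
    nhdsWithin_mono x₀ (fun y hy => ne_of_gt hy)
  have hev' : ∀ᶠ y in 𝓝[>] x₀, 0 < deriv f y := by
    filter_upwards [hev.filter_mono hmono, self_mem_nhdsWithin] with y h1 hy
    rw [slope_def_field, hf1, sub_zero] at h1
    have hyx : 0 < y - x₀ := sub_pos.2 hy
    have := mul_pos h1 hyx
    rwa [div_mul_cancel₀ _ (ne_of_gt hyx)] at this
  have hloc : ∀ᶠ y in 𝓝[>] x₀, f y ≤ f x₀ := h.filter_mono nhdsWithin_le_nhds
  obtain ⟨b, hb, hsub⟩ := mem_nhdsGT_iff_exists_Ioo_subset.mp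
    ((hev'.and hloc) : {y | 0 < deriv f y ∧ f y ≤ f x₀} ∈ 𝓝[>] x₀)
  have hxb : x₀ < b := hb
  set m : ℝ := (x₀ + b) / 2 with hm
  have hx₀m : x₀ < m := by simp only [hm]; linarith
  have hmb : m < b := by simp only [hm]; linarith
  have hsm : StrictMonoOn f (Set.Icc x₀ m) := by
    apply strictMonoOn_of_deriv_pos (convex_Icc _ _) (hf.continuous.continuousOn)
    intro y hy
    rw [interior_Icc] at hy
    exact (hsub ⟨hy.1, lt_trans hy.2 hmb⟩).1
  have h1 : f x₀ < f m :=
    hsm (Set.left_mem_Icc.2 (le_of_lt hx₀m)) (Set.right_mem_Icc.2 (le_of_lt hx₀m)) hx₀m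
  have h2 : f m ≤ f x₀ := (hsub ⟨hx₀m, hmb⟩).2
  linarith

/-- Maximum principle: upper bound for the system. -/
private lemma maxp {M : ℕ} (hM : 0 < M) (ε Δt B : ℝ) (hε : 0 < ε) (hΔt : 0 < Δt)
    (hB : 0 ≤ B) (a : Fin M → Fin M → ℝ → ℝ)
    (hoff : ∀ k m, k ≠ m → ∀ x ∈ Set.Icc (0:ℝ) 1, a k m x ≤ 0)
    (hrow : ∀ k, ∀ x ∈ Set.Icc (0:ℝ) 1, 0 ≤ ∑ m, a k m x)
    (φ : ℝ → Fin M → ℝ) (hφ : ∀ k, ContDiff ℝ 2 (fun x => φ x k))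
    (heq : ∀ x ∈ Set.Ioo (0:ℝ) 1, ∀ k,
      |φ x k + (Δt/2) * (-ε * iteratedDeriv 2 (fun z => φ z k) x
        + ∑ m, a k m x * φ x m)| ≤ B)
    (hbc : ∀ k, φ 0 k = 0 ∧ φ 1 k = 0) :
    ∀ x ∈ Set.Icc (0:ℝ) 1, ∀ k, φ x k ≤ B := by
  haveI : Nonempty (Fin M) := ⟨⟨0, hM⟩⟩
  have hx01 : (0:ℝ) ∈ Set.Icc (0:ℝ) 1 := by norm_num
  choose xk hxk hmax using fun k =>
    (isCompact_Icc (a := (0:ℝ)) (b := 1)).exists_isMaxOn ⟨0, hx01⟩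
      ((hφ k).continuous.continuousOn)
  obtain ⟨k₀, -, hk₀⟩ := Finset.exists_max_image Finset.univ (fun k => φ (xk k) k)
    ⟨Classical.arbitrary _, Finset.mem_univ _⟩
  set S := φ (xk k₀) k₀ with hS
  have hSall : ∀ x ∈ Set.Icc (0:ℝ) 1, ∀ k, φ x k ≤ S := fun x hx k =>
    le_trans (hmax k hx) (hk₀ k (Finset.mem_univ _))
  rcases le_or_gt S 0 with hS0 | hS0
  · exact fun x hx k => le_trans (le_trans (hSall x hx k) hS0) hB
  · set x₀ := xk k₀ with hx₀
    have hx₀I : x₀ ∈ Set.Icc (0:ℝ) 1 := hxk k₀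
    have hne0 : x₀ ≠ 0 := by
      intro he; rw [hS, he, (hbc k₀).1] at hS0; exact lt_irrefl _ hS0
    have hne1 : x₀ ≠ 1 := by
      intro he; rw [hS, he, (hbc k₀).2] at hS0; exact lt_irrefl _ hS0
    have hx₀O : x₀ ∈ Set.Ioo (0:ℝ) 1 :=
      ⟨lt_of_le_of_ne hx₀I.1 (Ne.symm hne0), lt_of_le_of_ne hx₀I.2 hne1⟩
    have hlm : IsLocalMax (fun x => φ x k₀) x₀ :=
      (hmax k₀).isLocalMax (Icc_mem_nhds hx₀O.1 hx₀O.2)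
    have hd2 : iteratedDeriv 2 (fun z => φ z k₀) x₀ ≤ 0 :=
      second_deriv_nonpos_of_isLocalMax (hφ k₀) hlm
    have hsum : (∑ m, a k₀ m x₀) * S ≤ ∑ m, a k₀ m x₀ * φ x₀ m := by
      rw [Finset.sum_mul]
      apply Finset.sum_le_sum
      intro m _
      rcases eq_or_ne m k₀ with rfl | hm
      · rw [hS]
      · exact mul_le_mul_of_nonpos_left (hSall x₀ hx₀I m) (hoff k₀ m (Ne.symm hm) x₀ hx₀I)
    have hsum0 : 0 ≤ ∑ m, a k₀ m x₀ * φ x₀ m :=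
      le_trans (mul_nonneg (hrow k₀ x₀ hx₀I) (le_of_lt hS0)) hsum
    have hexpr : S ≤ φ x₀ k₀ + (Δt/2) * (-ε * iteratedDeriv 2 (fun z => φ z k₀) x₀
        + ∑ m, a k₀ m x₀ * φ x₀ m) := by
      have h1 : 0 ≤ -ε * iteratedDeriv 2 (fun z => φ z k₀) x₀ := by nlinarith
      nlinarith
    have := heq x₀ hx₀O k₀
    have hSB : S ≤ B := le_trans hexpr (le_trans (le_abs_self _) this)
    exact fun x hx k => le_trans (hSall x hx k) hSB

theorem stmt_7
    (C₀ : ℝ) (hC₀ : 0 ≤ C₀) :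
    ∃ C : ℝ, ∀ (M : ℕ), 2 ≤ M → ∀ (βs : ℝ), 0 < βs →
    ∀ a : Fin M → Fin M → ℝ → ℝ,
      (∀ k m, ContinuousOn (a k m) (Set.Icc 0 1)) →
      (∀ k m, k ≠ m → ∀ x ∈ Set.Icc (0:ℝ) 1, a k m x ≤ 0) →
      (∀ k, ∀ x ∈ Set.Icc (0:ℝ) 1, 0 < a k k x) →
      (∀ k, ∀ x ∈ Set.Icc (0:ℝ) 1, βs ≤ ∑ m, a k m x) →
    ∀ (T : ℝ), 0 < T → ∀ ε ∈ Set.Ioc (0:ℝ) 1, ∀ Δt : ℝ, 0 < Δt →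
    ∀ n : ℕ, (n * Δt + Δt ≤ T) →
    ∀ (u : ℝ → ℝ → Fin M → ℝ) (f : ℝ → ℝ → Fin M → ℝ) (uhat : ℝ → Fin M → ℝ),
      (∀ k t, ContDiff ℝ 2 (fun x => u x t k)) →
      (∀ k x, ContDiff ℝ 1 (fun t => u x t k)) →
      (∀ x ∈ Set.Icc (0:ℝ) 1, ∀ t ∈ Set.Icc (0:ℝ) T, ∀ k, |f x t k| ≤ C₀) →
      (∀ x ∈ Set.Icc (0:ℝ) 1, ∀ t ∈ Set.Icc (0:ℝ) T, ∀ k,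
        |deriv (fun s => u x s k) t| ≤ C₀) →
      (∀ x ∈ Set.Ioo (0:ℝ) 1, ∀ t ∈ Set.Ioc (0:ℝ) T, ∀ k,
        deriv (fun s => u x s k) t - ε * iteratedDeriv 2 (fun z => u z t k) x
          + ∑ m, a k m x * u x t m = f x t k) →
      (∀ t ∈ Set.Icc (0:ℝ) T, ∀ k, u 0 t k = 0 ∧ u 1 t k = 0) →
      (∀ x ∈ Set.Icc (0:ℝ) 1, ∀ k, u x 0 k = 0) →
      (∀ k, ContDiff ℝ 2 (fun x => uhat x k)) →
      (∀ x ∈ Set.Ioo (0:ℝ) 1, ∀ k,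
        uhat x k + (Δt/2) * (-ε * iteratedDeriv 2 (fun z => uhat z k) x
            + ∑ m, a k m x * uhat x m)
          = u x (n * Δt) k - (Δt/2) * (-ε * iteratedDeriv 2 (fun z => u z (n * Δt) k) x
              + ∑ m, a k m x * u x (n * Δt) m)
            + (Δt/2) * (f x (n * Δt) k + f x (n * Δt + Δt) k)) →
      (∀ k, uhat 0 k = 0 ∧ uhat 1 k = 0) →
      ∀ x ∈ Set.Icc (0:ℝ) 1, ∀ k,
        |(2/Δt) * (uhat x k - u x (n * Δt) k)| ≤ C := by
  refine ⟨6 * C₀, ?_⟩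
  intro M hM βs hβs a haC haoff hadiag harow T hT ε hε Δt hΔt n hnT
    u f uhat huC2 huC1t hfb hutb hpde hubd hu0 huhatC2 hhat huhatbd
  have hεpos : 0 < ε := hε.1
  have hΔt' : Δt ≠ 0 := ne_of_gt hΔt
  set tn : ℝ := n * Δt with htn
  have htn0 : 0 ≤ tn := by positivity
  have htnT : tn ≤ T := by
    have : tn + Δt ≤ T := hnT
    linarith
  have htn1T : tn + Δt ≤ T := hnT
  have htn1pos : 0 < tn + Δt := by positivity
  -- the divided difference
  set φ : ℝ → Fin M → ℝ := fun x k => (2/Δt) * (uhat x k - u x tn k) with hφdef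
  have hφC2 : ∀ k, ContDiff ℝ 2 (fun x => φ x k) := fun k =>
    contDiff_const.mul ((huhatC2 k).sub (huC2 k tn))
  have hD2 : ∀ k x, iteratedDeriv 2 (fun z => φ z k) x
      = (2/Δt) * (iteratedDeriv 2 (fun z => uhat z k) x
        - iteratedDeriv 2 (fun z => u z tn k) x) := by
    intro k x
    rw [show (fun z => φ z k) = (fun z => (2/Δt) * (uhat z k - u z tn k)) from rfl,
      itd2_const_mul _ ((huhatC2 k).sub (huC2 k tn)) x,
      itd2_sub (huhatC2 k) (huC2 k tn) x]
  -- bound on the stationary operator applied to u(·,tn)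
  have hLu : ∀ x ∈ Set.Ioo (0:ℝ) 1, ∀ k,
      |(-ε * iteratedDeriv 2 (fun z => u z tn k) x + ∑ m, a k m x * u x tn m)| ≤ 2 * C₀ := by
    intro x hx k
    have hxI : x ∈ Set.Icc (0:ℝ) 1 := Set.mem_Icc.2 ⟨le_of_lt hx.1, le_of_lt hx.2⟩
    rcases Nat.eq_zero_or_pos n with hn0 | hn
    · -- tn = 0 and u(·,0) = 0
      have htn' : tn = 0 := by rw [htn, hn0]; simp
      have hzero : (fun z => u z tn k) =ᶠ[𝓝 x] (fun _ => (0:ℝ)) := by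
        filter_upwards [Ioo_mem_nhds hx.1 hx.2] with z hz
        rw [htn']
        exact hu0 z ⟨le_of_lt hz.1, le_of_lt hz.2⟩ k
      have h1 : iteratedDeriv 2 (fun z => u z tn k) x = 0 := by
        rw [hzero.iteratedDeriv_eq 2]
        simp [iteratedDeriv_succ]
      have h2 : ∀ m, u x tn m = 0 := fun m => by rw [htn']; exact hu0 x hxI m
      rw [h1]
      simp only [h2, mul_zero, Finset.sum_const_zero, add_zero, abs_zero]
      linarith
    · -- tn ∈ (0, T]: use the PDE
      have htnpos : 0 < tn := by
        rw [htn]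
        have : (1:ℝ) ≤ (n:ℝ) := by exact_mod_cast hn
        nlinarith
      have hp := hpde x hx tn ⟨htnpos, htnT⟩ k
      have hub := hutb x hxI tn ⟨htn0, htnT⟩ k
      have hfb' := hfb x hxI tn ⟨htn0, htnT⟩ k
      have : -ε * iteratedDeriv 2 (fun z => u z tn k) x + ∑ m, a k m x * u x tn m
          = f x tn k - deriv (fun s => u x s k) tn := by linarith
      rw [this]
      rw [abs_le] at hub hfb' ⊢
      constructor <;> linarith
  -- the equation satisfied by φ, in absolute-value form
  have heqφ : ∀ x ∈ Set.Ioo (0:ℝ) 1, ∀ k,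
      |φ x k + (Δt/2) * (-ε * iteratedDeriv 2 (fun z => φ z k) x
        + ∑ m, a k m x * φ x m)| ≤ 6 * C₀ := by
    intro x hx k
    have hxI : x ∈ Set.Icc (0:ℝ) 1 := Set.mem_Icc.2 ⟨le_of_lt hx.1, le_of_lt hx.2⟩
    have hsumφ : ∑ m, a k m x * φ x m
        = (2/Δt) * (∑ m, a k m x * uhat x m - ∑ m, a k m x * u x tn m) := by
      rw [mul_sub, Finset.mul_sum, Finset.mul_sum, ← Finset.sum_sub_distrib]
      exact Finset.sum_congr rfl fun m _ => by simp only [hφdef]; ring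
    have hh := hhat x hx k
    have hval : φ x k + (Δt/2) * (-ε * iteratedDeriv 2 (fun z => φ z k) x
          + ∑ m, a k m x * φ x m)
        = f x tn k + f x (tn + Δt) k
          - 2 * (-ε * iteratedDeriv 2 (fun z => u z tn k) x
            + ∑ m, a k m x * u x tn m) := by
      rw [hD2 k x, hsumφ, hφdef]
      have hc : (2/Δt) * (Δt/2) = 1 := by field_simp
      field_simp at hh ⊢
      nlinarith [hh]
    rw [hval]
    have h1 := hfb x hxI tn ⟨htn0, htnT⟩ k
    have h2 := hfb x hxI (tn + Δt) ⟨le_of_lt htn1pos, htn1T⟩ k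
    have h3 := hLu x hx k
    rw [abs_le] at h1 h2 h3 ⊢
    constructor <;> linarith
  -- apply the maximum principle to φ and -φ
  have hMpos : 0 < M := lt_of_lt_of_le (by norm_num) hM
  have harow' : ∀ k, ∀ x ∈ Set.Icc (0:ℝ) 1, 0 ≤ ∑ m, a k m x := fun k x hx =>
    le_trans (le_of_lt hβs) (harow k x hx)
  have hB : (0:ℝ) ≤ 6 * C₀ := by linarith
  have hbcφ : ∀ k, φ 0 k = 0 ∧ φ 1 k = 0 := by
    intro k
    constructor
    · rw [hφdef]; simp [(huhatbd k).1, (hubd tn ⟨htn0, htnT⟩ k).1]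
    · rw [hφdef]; simp [(huhatbd k).2, (hubd tn ⟨htn0, htnT⟩ k).2]
  have hup := maxp hMpos ε Δt (6*C₀) hεpos hΔt hB a haoff harow' φ hφC2 heqφ hbcφ
  have hdown := maxp hMpos ε Δt (6*C₀) hεpos hΔt hB a haoff harow'
      (fun x k => -φ x k) (fun k => (hφC2 k).neg)
      (by
        intro x hx k
        have hneg : iteratedDeriv 2 (fun z => -φ z k) x
            = -iteratedDeriv 2 (fun z => φ z k) x := iteratedDeriv_neg 2 _ x
        have : -φ x k + (Δt/2) * (-ε * iteratedDeriv 2 (fun z => -φ z k) x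
              + ∑ m, a k m x * -φ x m)
            = -(φ x k + (Δt/2) * (-ε * iteratedDeriv 2 (fun z => φ z k) x
              + ∑ m, a k m x * φ x m)) := by
          rw [hneg]
          simp only [mul_neg, Finset.sum_neg_distrib]
          ring
        rw [this, abs_neg]
        exact heqφ x hx k)
      (fun k => ⟨show -φ 0 k = 0 by rw [(hbcφ k).1]; ring,
        show -φ 1 k = 0 by rw [(hbcφ k).2]; ring⟩)
  intro x hx k
  rw [abs_le]
  have h2 : -φ x k ≤ 6 * C₀ := hdown x hx k
  have h1 : φ x k ≤ 6 * C₀ := hup x hx k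
  have h3 : φ x k = 2 / Δt * (uhat x k - u x tn k) := rfl
  constructor <;> [linarith; linarith]
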